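/- Let B : [0,1] → ℝ be continuous with B(0) = 0, and let u : [0,1] → ℝ be continuously differentiable and satisfy, for every x ∈ [0,1], the integral equation x − u(x) = (x−1)·∫_0^x (y·u'(y) + u(y))·B(y) dy − x·∫_x^1 ((1−y)·u'(y) − u(y))·B(y) dy. Then u(0) = 0, u(1) = 1, and u is a B-solution. -/

import Mathlib

open MeasureTheory intervalIntegral

/-- `u` is a pathwise (`B`-)solution of the homogeneous equation `-u'' + B'·u = 0`. -/
def IsBSolution (B u u' : ℝ → ℝ) : Prop :=
  (∀ x ∈ Set.Icc (0:ℝ) 1, HasDerivWithinAt u (u' x) (Set.Icc 0 1) x) ∧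
  ContinuousOn u' (Set.Icc 0 1) ∧
  ∀ x ∈ Set.Icc (0:ℝ) 1, u' x = u' 0 + u x * B x - ∫ y in (0:ℝ)..x, u' y * B y

/-- A continuously differentiable solution of the pathwise integral equation
x - u(x) = (x-1)·∫_0^x (y·u'(y)+u(y))·B(y) dy - x·∫_x^1 ((1-y)·u'(y)-u(y))·B(y) dy
satisfies u(0)=0, u(1)=1 and is a B-solution. -/
theorem integral_equation_gives_bsolution (B u u' : ℝ → ℝ)
    (hB : ContinuousOn B (Set.Icc 0 1)) (hB0 : B 0 = 0)
    (hderiv : ∀ x ∈ Set.Icc (0:ℝ) 1, HasDerivWithinAt u (u' x) (Set.Icc 0 1) x)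
    (hcont : ContinuousOn u' (Set.Icc 0 1))
    (heq : ∀ x ∈ Set.Icc (0:ℝ) 1,
      x - u x = (x - 1) * (∫ y in (0:ℝ)..x, (y * u' y + u y) * B y)
        - x * (∫ y in x..(1:ℝ), ((1 - y) * u' y - u y) * B y)) :
    u 0 = 0 ∧ u 1 = 1 ∧ IsBSolution B u u' := by
  have h01 : (0:ℝ) ≤ 1 := by norm_num
  have h0m : (0:ℝ) ∈ Set.Icc (0:ℝ) 1 := by constructor <;> norm_num
  have h1m : (1:ℝ) ∈ Set.Icc (0:ℝ) 1 := by constructor <;> norm_num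
  have h0 : u 0 = 0 := by
    have h := heq 0 h0m
    simp [intervalIntegral.integral_same] at h
    linarith
  have h1 : u 1 = 1 := by
    have h := heq 1 h1m
    simp [intervalIntegral.integral_same] at h
    linarith
  refine ⟨h0, h1, hderiv, hcont, ?_⟩
  -- notation
  set f : ℝ → ℝ := fun y => (y * u' y + u y) * B y with hf_def
  set g : ℝ → ℝ := fun y => ((1 - y) * u' y - u y) * B y with hg_def
  have hu_cont : ContinuousOn u (Set.Icc 0 1) := fun x hx =>
    (hderiv x hx).continuousWithinAt
  have hf_cont : ContinuousOn f (Set.Icc 0 1) := by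
    apply ContinuousOn.mul _ hB
    exact ((continuousOn_id.mul hcont).add hu_cont)
  have hg_cont : ContinuousOn g (Set.Icc 0 1) := by
    apply ContinuousOn.mul _ hB
    exact (((continuousOn_const.sub continuousOn_id).mul hcont).sub hu_cont)
  -- clamp
  set p : ℝ → ℝ := fun x => min 1 (max 0 x) with hp_def
  have hp : Continuous p := by fun_prop
  have hpmem : ∀ x, p x ∈ Set.Icc (0:ℝ) 1 :=
    fun x => ⟨le_min h01 (le_max_left 0 x), min_le_left _ _⟩
  have hpx : ∀ x ∈ Set.Icc (0:ℝ) 1, p x = x := by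
    intro x hx
    simp only [hp_def]
    rw [max_eq_right hx.1, min_eq_right hx.2]
  set ft : ℝ → ℝ := f ∘ p with hft_def
  set gt : ℝ → ℝ := g ∘ p with hgt_def
  have hft : Continuous ft := hf_cont.comp_continuous hp hpmem
  have hgt : Continuous gt := hg_cont.comp_continuous hp hpmem
  have hfteq : ∀ x ∈ Set.Icc (0:ℝ) 1, ft x = f x := by
    intro x hx; simp only [hft_def, Function.comp_apply, hpx x hx]
  have hgteq : ∀ x ∈ Set.Icc (0:ℝ) 1, gt x = g x := by
    intro x hx; simp only [hgt_def, Function.comp_apply, hpx x hx]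
  set Ft : ℝ → ℝ := fun x => ∫ y in (0:ℝ)..x, ft y with hFt_def
  set Ht : ℝ → ℝ := fun x => ∫ y in (0:ℝ)..x, gt y with hHt_def
  set C : ℝ := ∫ y in (0:ℝ)..(1:ℝ), gt y with hC_def
  have hsub : ∀ x ∈ Set.Icc (0:ℝ) 1, Set.uIcc 0 x ⊆ Set.Icc (0:ℝ) 1 := by
    intro x hx
    rw [show Set.Icc (0:ℝ) 1 = Set.uIcc 0 1 from (Set.uIcc_of_le h01).symm]
    exact Set.uIcc_subset_uIcc Set.left_mem_uIcc (by rwa [Set.uIcc_of_le h01])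
  have hsub' : ∀ x ∈ Set.Icc (0:ℝ) 1, Set.uIcc x 1 ⊆ Set.Icc (0:ℝ) 1 := by
    intro x hx
    rw [show Set.Icc (0:ℝ) 1 = Set.uIcc 0 1 from (Set.uIcc_of_le h01).symm]
    exact Set.uIcc_subset_uIcc (by rwa [Set.uIcc_of_le h01]) Set.right_mem_uIcc
  have hFeq : ∀ x ∈ Set.Icc (0:ℝ) 1, Ft x = ∫ y in (0:ℝ)..x, f y := by
    intro x hx
    exact intervalIntegral.integral_congr fun y hy => hfteq y (hsub x hx hy)
  have hGeq : ∀ x ∈ Set.Icc (0:ℝ) 1,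
      (∫ y in x..(1:ℝ), g y) = C - Ht x := by
    intro x hx
    have h1 : (∫ y in x..(1:ℝ), g y) = ∫ y in x..(1:ℝ), gt y :=
      (intervalIntegral.integral_congr fun y hy => hgteq y (hsub' x hx hy)).symm
    rw [h1, hC_def]
    rw [← intervalIntegral.integral_interval_sub_left
      (hgt.intervalIntegrable 0 1) (hgt.intervalIntegrable 0 x)]
  -- the function v
  set v : ℝ → ℝ := fun x => x - (x - 1) * Ft x + x * (C - Ht x) with hv_def
  have huv : ∀ x ∈ Set.Icc (0:ℝ) 1, u x = v x := by
    intro x hx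
    have h := heq x hx
    rw [← hFeq x hx] at h
    rw [hGeq x hx] at h
    simp only [hv_def]
    linarith
  -- derivative of v
  have hFt' : ∀ x : ℝ, HasDerivAt Ft (ft x) x := by
    intro x
    exact intervalIntegral.integral_hasDerivAt_right (hft.intervalIntegrable 0 x)
      hft.aestronglyMeasurable.stronglyMeasurableAtFilter hft.continuousAt
  have hHt' : ∀ x : ℝ, HasDerivAt Ht (gt x) x := by
    intro x
    exact intervalIntegral.integral_hasDerivAt_right (hgt.intervalIntegrable 0 x)
      hgt.aestronglyMeasurable.stronglyMeasurableAtFilter hgt.continuousAt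
  have hv' : ∀ x : ℝ, HasDerivAt v
      (1 - (Ft x + (x - 1) * ft x) + ((C - Ht x) - x * gt x)) x := by
    intro x
    have hid : HasDerivAt (fun x : ℝ => x) 1 x := hasDerivAt_id x
    have h1 : HasDerivAt (fun x : ℝ => (x - 1) * Ft x)
        (1 * Ft x + (x - 1) * ft x) x := (hid.sub_const 1).mul (hFt' x)
    have h2 : HasDerivAt (fun x : ℝ => x * (C - Ht x))
        (1 * (C - Ht x) + x * (0 - gt x)) x :=
      hid.mul ((hasDerivAt_const x C).sub (hHt' x))
    have := (hid.sub h1).add h2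
    refine this.congr_deriv ?_
    ring
  -- u' equals the derivative of v on Icc
  have key : ∀ x ∈ Set.Icc (0:ℝ) 1,
      u' x = 1 - (Ft x + (x - 1) * f x) + ((C - Ht x) - x * g x) := by
    intro x hx
    have hu'' : HasDerivWithinAt u
        (1 - (Ft x + (x - 1) * ft x) + ((C - Ht x) - x * gt x)) (Set.Icc 0 1) x :=
      ((hv' x).hasDerivWithinAt).congr huv (huv x hx)
    have := (uniqueDiffOn_Icc one_pos x hx).eq_deriv _ (hderiv x hx) hu''
    rw [this, hfteq x hx, hgteq x hx]
  -- value at 0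
  have hF0 : Ft 0 = 0 := intervalIntegral.integral_same
  have hH0 : Ht 0 = 0 := intervalIntegral.integral_same
  have key0 : u' 0 = 1 + C := by
    have h := key 0 h0m
    simp only [hf_def, hg_def] at h
    rw [hF0, hH0, hB0] at h
    simp at h
    linarith
  -- conclusion
  intro x hx
  have hint : (∫ y in (0:ℝ)..x, u' y * B y) = Ft x + Ht x := by
    have h1 : (∫ y in (0:ℝ)..x, u' y * B y) = ∫ y in (0:ℝ)..x, (ft y + gt y) := by
      apply intervalIntegral.integral_congr
      intro y hy
      have hym := hsub x hx hy
      show u' y * B y = ft y + gt y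
      rw [hfteq y hym, hgteq y hym]
      simp only [hf_def, hg_def]
      ring
    rw [h1, intervalIntegral.integral_add (hft.intervalIntegrable 0 x)
      (hgt.intervalIntegrable 0 x)]
  have hk := key x hx
  have halg : (x - 1) * f x + x * g x = -(u x * B x) := by
    simp only [hf_def, hg_def]; ring
  rw [hint, key0]
  linarith
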